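/- arXiv:1806.04500 — 2 statements merged into one kernel-verified Lean document; each statement's English description precedes it below -/
import Mathlib

section
/- Integration of the decoupled shell-2 equations (quasi-stationary solutions with nonholonomic torsion, shell s = 2). Work in coordinates (x¹,x²,y) ∈ ℝ² × ℝ and write ∂_y for ∂/∂y. Let Ψ, Υ : ℝ³ → ℝ be smooth with Υ > 0, Ψ > 0 and ∂_yΨ > 0 everywhere; let g₄⁰, n₁ₖ, n₂ₖ : ℝ² → ℝ (k = 1,2) be smooth. Define g₄(x,y) := g₄⁰(x) − ∫₀^y ∂_s(Ψ²)(x,s) / (4Υ(x,s)) ds and assume g₄ < 0 everywhere; define g₃ := −(∂_yΨ)² / (4Υ² g₄), w_k := ∂_{x^k}Ψ / ∂_yΨ, and n_k(x,y) := n₁ₖ(x) + n₂ₖ(x) ∫₀^y g₃(x,s) (−g₄(x,s))^{−3/2} ds. Then, setting ϖ := ln( |∂_y g₄| / √(−g₃ g₄) ), one has ϖ = ln Ψ, and the following hold everywhere: (a) (∂_yϖ)(∂_y g₄) = 2 g₃ g₄ Υ; (b) (∂_y g₄)(∂_yϖ) w_k = (∂_y g₄)(∂_{x^k}ϖ) for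 k = 1,2; (c) ∂²_{yy} n_k + [∂_y ln( (−g₄)^{3/2} / g₃ )] ∂_y n_k = 0 for k = 1,2. -/
namespace Stmt5

noncomputable section

/-- The horizontal coordinates `(x¹, x²)`. -/
abbrev X : Type := Fin 2 → ℝ

/-- Partial derivative in the fiber coordinate `y` of a (curried) function on `ℝ² × ℝ`. -/
def pdy (f : X → ℝ → ℝ) (x : X) (y : ℝ) : ℝ := deriv (f x) y

/-- Partial derivative in the base coordinate `x^k` of a (curried) function on `ℝ² × ℝ`. -/
def pdx (k : Fin 2) (f : X → ℝ → ℝ) (x : X) (y : ℝ) : ℝ :=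
  fderiv ℝ (fun x' => f x' y) x (Pi.single k 1)

theorem shell2_quasistationary_integration
    (Ψ Υ : X → ℝ → ℝ)
    (hΨ : ContDiff ℝ (⊤ : ℕ∞) (Function.uncurry Ψ))
    (hΥ : ContDiff ℝ (⊤ : ℕ∞) (Function.uncurry Υ))
    (hΥpos : ∀ x y, 0 < Υ x y) (hΨpos : ∀ x y, 0 < Ψ x y)
    (hΨy : ∀ x y, 0 < pdy Ψ x y)
    (g40 : X → ℝ) (n1 n2 : Fin 2 → X → ℝ)
    (hg40 : ContDiff ℝ (⊤ : ℕ∞) g40)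
    (hn1 : ∀ k, ContDiff ℝ (⊤ : ℕ∞) (n1 k)) (hn2 : ∀ k, ContDiff ℝ (⊤ : ℕ∞) (n2 k))
    -- `g₄(x,y) = g₄⁰(x) − ∫₀^y ∂_s(Ψ²)/(4Υ) ds`, assumed negative
    (g4 : X → ℝ → ℝ)
    (hg4 : ∀ x y, g4 x y =
      g40 x - ∫ s in (0:ℝ)..y, deriv (fun t => Ψ x t ^ 2) s / (4 * Υ x s))
    (hg4neg : ∀ x y, g4 x y < 0)
    -- `g₃ = −(∂_yΨ)²/(4Υ²g₄)`
    (g3 : X → ℝ → ℝ)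
    (hg3 : ∀ x y, g3 x y = -(pdy Ψ x y) ^ 2 / (4 * Υ x y ^ 2 * g4 x y))
    -- `w_k = ∂_{x^k}Ψ / ∂_yΨ`
    (w : Fin 2 → X → ℝ → ℝ)
    (hw : ∀ k x y, w k x y = pdx k Ψ x y / pdy Ψ x y)
    -- `n_k(x,y) = n₁ₖ(x) + n₂ₖ(x) ∫₀^y g₃ (−g₄)^{−3/2} ds`
    (nf : Fin 2 → X → ℝ → ℝ)
    (hnf : ∀ k x y, nf k x y = n1 k x + n2 k x *
      ∫ s in (0:ℝ)..y, g3 x s * (-g4 x s) ^ (-(3:ℝ)/2))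
    -- `ϖ = ln( |∂_y g₄| / √(−g₃ g₄) )`
    (varpi : X → ℝ → ℝ)
    (hvarpi : ∀ x y, varpi x y =
      Real.log (|pdy g4 x y| / Real.sqrt (-(g3 x y * g4 x y)))) :
    -- `ϖ = ln Ψ`
    (∀ x y, varpi x y = Real.log (Ψ x y)) ∧
    -- (a) `(∂_yϖ)(∂_y g₄) = 2 g₃ g₄ Υ`
    (∀ x y, pdy varpi x y * pdy g4 x y = 2 * g3 x y * g4 x y * Υ x y) ∧
    -- (b) `(∂_y g₄)(∂_yϖ) w_k = (∂_y g₄)(∂_{x^k}ϖ)`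
    (∀ k x y, pdy g4 x y * pdy varpi x y * w k x y = pdy g4 x y * pdx k varpi x y) ∧
    -- (c) `∂²_{yy} n_k + [∂_y ln((−g₄)^{3/2}/g₃)] ∂_y n_k = 0`
    (∀ k x y, deriv (deriv (nf k x)) y +
      deriv (fun t => Real.log ((-g4 x t) ^ ((3:ℝ)/2) / g3 x t)) y *
        deriv (nf k x) y = 0) := by
  classical
  have hΨx : ∀ x, ContDiff ℝ (⊤:ℕ∞) (Ψ x) := fun x =>
    hΨ.comp (contDiff_const.prodMk contDiff_id)
  have hΥx : ∀ x, ContDiff ℝ (⊤:ℕ∞) (Υ x) := fun x =>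
    hΥ.comp (contDiff_const.prodMk contDiff_id)
  have hΨ'c : ∀ x, ContDiff ℝ (⊤:ℕ∞) (deriv (Ψ x)) := fun x =>
    (contDiff_infty_iff_deriv.mp (hΨx x)).2
  have hΨd : ∀ x y, HasDerivAt (Ψ x) (pdy Ψ x y) y := fun x y =>
    (((hΨx x).differentiable (by simp)) y).hasDerivAt
  have hFcont : ∀ x, Continuous (fun s => deriv (fun t => Ψ x t ^ 2) s / (4 * Υ x s)) := by
    intro x
    have h1 : ContDiff ℝ (⊤:ℕ∞) (fun t => Ψ x t ^ 2) := (hΨx x).pow 2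
    exact ((contDiff_infty_iff_deriv.mp h1).2.continuous).div
      (continuous_const.mul (hΥx x).continuous)
      (fun s => by have := hΥpos x s; positivity)
  have hg4fun : ∀ x, g4 x = fun y => g40 x - ∫ s in (0:ℝ)..y,
      deriv (fun t => Ψ x t ^ 2) s / (4 * Υ x s) := fun x => funext (hg4 x)
  have hg4d : ∀ x y, HasDerivAt (g4 x) (-(Ψ x y * pdy Ψ x y) / (2 * Υ x y)) y := by
    intro x y
    rw [hg4fun x]
    have hint : HasDerivAt (fun u => ∫ s in (0:ℝ)..u, deriv (fun t => Ψ x t ^ 2) s / (4 * Υ x s))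
        (deriv (fun t => Ψ x t ^ 2) y / (4 * Υ x y)) y :=
      intervalIntegral.integral_hasDerivAt_right
        ((hFcont x).intervalIntegrable _ _)
        ((hFcont x).stronglyMeasurableAtFilter _ _)
        (hFcont x).continuousAt
    have hpow : deriv (fun t => Ψ x t ^ 2) y = 2 * Ψ x y * pdy Ψ x y := by
      have h := ((hΨd x y).pow 2).deriv; simp at h; exact h
    have hfinal : HasDerivAt (fun u => g40 x - ∫ s in (0:ℝ)..u, deriv (fun t => Ψ x t ^ 2) s / (4 * Υ x s))
        (0 - deriv (fun t => Ψ x t ^ 2) y / (4 * Υ x y)) y := (hasDerivAt_const y (g40 x)).sub hint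
    convert hfinal using 1
    rw [hpow]
    have hΥ0 := (hΥpos x y).ne'
    field_simp
    ring
  have hpdyg4 : ∀ x y, pdy g4 x y = -(Ψ x y * pdy Ψ x y) / (2 * Υ x y) := fun x y =>
    (hg4d x y).deriv
  have hg4dneg : ∀ x y, pdy g4 x y < 0 := by
    intro x y
    rw [hpdyg4]
    have h1 := hΨpos x y; have h2 := hΨy x y; have h3 := hΥpos x y
    exact div_neg_of_neg_of_pos (neg_lt_zero.mpr (mul_pos h1 h2)) (by positivity)
  have hg3pos : ∀ x y, 0 < g3 x y := by
    intro x y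
    rw [hg3]
    have h2 := hΨy x y; have h3 := hΥpos x y; have h4 := hg4neg x y
    exact div_pos_of_neg_of_neg (neg_lt_zero.mpr (by positivity))
      (mul_neg_of_pos_of_neg (by positivity) h4)
  have hsq : ∀ x y, Real.sqrt (-(g3 x y * g4 x y)) = pdy Ψ x y / (2 * Υ x y) := by
    intro x y
    have h2 := hΨy x y; have h3 := (hΥpos x y).ne'; have h4 := (hg4neg x y).ne
    have heq : -(g3 x y * g4 x y) = (pdy Ψ x y / (2 * Υ x y)) ^ 2 := by
      rw [hg3]; field_simp; ring
    have h3p := hΥpos x y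
    rw [heq, Real.sqrt_sq (div_nonneg h2.le (by positivity))]
  have part1 : ∀ x y, varpi x y = Real.log (Ψ x y) := by
    intro x y
    have h1 := hΨpos x y; have h2 := hΨy x y; have h3 := hΥpos x y
    rw [hvarpi, hsq, abs_of_neg (hg4dneg x y), hpdyg4]
    congr 1
    field_simp
  have hvarpix : ∀ x, varpi x = fun y => Real.log (Ψ x y) := fun x => funext (part1 x)
  have hpdyvarpi : ∀ x y, pdy varpi x y = pdy Ψ x y / Ψ x y := by
    intro x y
    have hl : HasDerivAt (fun t => Real.log (Ψ x t)) (pdy Ψ x y / Ψ x y) y :=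
      (hΨd x y).log (hΨpos x y).ne'
    show deriv (varpi x) y = _
    rw [hvarpix x]
    exact hl.deriv
  refine ⟨part1, ?_, ?_, ?_⟩
  · -- (a)
    intro x y
    rw [hpdyvarpi, hpdyg4, hg3]
    have h1 := (hΨpos x y).ne'; have h3 := (hΥpos x y).ne'; have h4 := (hg4neg x y).ne
    field_simp
    ring
  · -- (b)
    intro k x y
    have hGd : DifferentiableAt ℝ (fun x' => Ψ x' y) x :=
      ((hΨ.comp (contDiff_id.prodMk contDiff_const)).differentiable (by simp)) x
    have hlog : HasFDerivAt (fun x' => Real.log (Ψ x' y))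
        ((Ψ x y)⁻¹ • fderiv ℝ (fun x' => Ψ x' y) x) x :=
      hGd.hasFDerivAt.log (hΨpos x y).ne'
    have hpdxvarpi : pdx k varpi x y = pdx k Ψ x y / Ψ x y := by
      have hfun : (fun x' => varpi x' y) = fun x' => Real.log (Ψ x' y) :=
        funext fun x' => part1 x' y
      show fderiv ℝ (fun x' => varpi x' y) x (Pi.single k 1) = _
      rw [hfun, hlog.fderiv]
      simp [pdx, div_eq_inv_mul]
    rw [hpdyvarpi, hpdxvarpi, hw]
    have h1 := (hΨpos x y).ne'; have h2 := (hΨy x y).ne'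
    field_simp
  · -- (c)
    intro k x y
    set q : ℝ → ℝ := fun s => g3 x s * (-g4 x s) ^ (-(3:ℝ)/2) with hq
    have hg4diff : Differentiable ℝ (g4 x) := fun s => (hg4d x s).differentiableAt
    have hg3fun : g3 x = fun s => -(deriv (Ψ x) s) ^ 2 / (4 * Υ x s ^ 2 * g4 x s) := by
      funext s
      simpa [pdy] using hg3 x s
    have hg3diff : Differentiable ℝ (g3 x) := by
      rw [hg3fun]
      intro s
      refine DifferentiableAt.div ?_ ?_ ?_
      · exact ((((hΨ'c x).differentiable (by simp)) s).pow 2).neg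
      · exact ((differentiableAt_const _).mul
          ((((hΥx x).differentiable (by simp)) s).pow 2)).mul (hg4diff s)
      · have h3 := (hΥpos x s).ne'
        exact mul_ne_zero (by positivity) (hg4neg x s).ne
    have hdiffq : Differentiable ℝ q := by
      intro s
      exact (hg3diff s).mul
        (((hg4diff s).neg).rpow_const (Or.inl (neg_pos.mpr (hg4neg x s)).ne'))
    have hqpos : ∀ s, 0 < q s := fun s =>
      mul_pos (hg3pos x s) (Real.rpow_pos_of_pos (neg_pos.mpr (hg4neg x s)) _)
    have hnffun : nf k x = fun y => n1 k x + n2 k x * ∫ s in (0:ℝ)..y, q s :=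
      funext fun y => hnf k x y
    have hcontq : Continuous q := hdiffq.continuous
    have hnd : ∀ t, HasDerivAt (nf k x) (n2 k x * q t) t := by
      intro t
      rw [hnffun]
      exact ((hasDerivAt_const t (n1 k x)).add ((intervalIntegral.integral_hasDerivAt_right
        (hcontq.intervalIntegrable 0 t) (hcontq.stronglyMeasurableAtFilter _ _)
        hcontq.continuousAt).const_mul (n2 k x))).congr_deriv (zero_add _)
    have hnd1 : deriv (nf k x) = fun t => n2 k x * q t := funext fun t => (hnd t).deriv
    have hdd : deriv (deriv (nf k x)) y = n2 k x * deriv q y := by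
      rw [hnd1]
      exact deriv_const_mul _ (hdiffq y)
    have hcoef_fun : (fun t => Real.log ((-g4 x t) ^ ((3:ℝ)/2) / g3 x t))
        = fun t => -Real.log (q t) := by
      funext t
      have h4 : (0:ℝ) < -g4 x t := neg_pos.mpr (hg4neg x t)
      have hqval : q t = ((-g4 x t) ^ ((3:ℝ)/2) / g3 x t)⁻¹ := by
        rw [hq]
        simp only
        rw [show (-(3:ℝ)/2) = -((3:ℝ)/2) by ring, Real.rpow_neg h4.le]
        field_simp
      rw [hqval, Real.log_inv, neg_neg]
    have hcoef : deriv (fun t => Real.log ((-g4 x t) ^ ((3:ℝ)/2) / g3 x t)) y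
        = -(deriv q y / q y) := by
      rw [hcoef_fun]
      exact (((hdiffq y).hasDerivAt.log (hqpos y).ne').neg).deriv
    rw [hdd, hcoef, hnd1]
    have hqy := (hqpos y).ne'
    field_simp
    ring


end

end Stmt5
end

section
/- Integration of the decoupled shell-4 equations (energy-type variable). Work in coordinates (x, E) ∈ ℝ⁶ × ℝ, where x = (x¹,…,x⁶) collects all lower-shell coordinates and E is the energy-type momentum coordinate; write (·)* for ∂/∂E. Let Ψ, Υ : ℝ⁶ × ℝ → ℝ be smooth with Υ > 0, Ψ > 0 and Ψ* > 0 everywhere; let g⁷₀, n₁ₖ, n₂ₖ : ℝ⁶ → ℝ (k = 1,…,6) be smooth. Define g⁷(x,E) := g⁷₀(x) − ∫₀^E ∂_s(Ψ²)(x,s)/(4Υ(x,s)) ds and assume g⁷ < 0 everywhere; define g⁸ := −(Ψ*)²/(4Υ² g⁷), w_k := ∂_{x^k}Ψ / Ψ*, and n_k(x,E) := n₁ₖ(x) + n₂ₖ(x) ∫₀^E g⁸(x,s)(−g⁷(x,s))^{−3/2} ds. Then, setting ϖ := ln( |(g⁷)*| / √(−g⁷ g⁸) ), one has ϖ = ln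 Ψ, and everywhere: (a) (ϖ*)(g⁷)* = 2 g⁷ g⁸ Υ; (b) ((g⁷)* ϖ*) w_k = (g⁷)* ∂_{x^k}ϖ for all k; (c) (n_k)** + [ln( (−g⁷)^{3/2} / g⁸ )]* (n_k)* = 0 for all k. -/
namespace Stmt6

noncomputable section

/-- The lower-shell coordinates `x = (x¹,…,x⁶)`. -/
abbrev X : Type := Fin 6 → ℝ

/-- Partial derivative in the energy coordinate `E` (the `(·)*` of the paper). -/
def pdE (f : X → ℝ → ℝ) (x : X) (E : ℝ) : ℝ := deriv (f x) E

/-- Partial derivative in the lower-shell coordinate `x^k`. -/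
def pdx (k : Fin 6) (f : X → ℝ → ℝ) (x : X) (E : ℝ) : ℝ :=
  fderiv ℝ (fun x' => f x' E) x (Pi.single k 1)

theorem shell4_quasistationary_integration
    (Ψ Υ : X → ℝ → ℝ)
    (hΨ : ContDiff ℝ (⊤ : ℕ∞) (Function.uncurry Ψ))
    (hΥ : ContDiff ℝ (⊤ : ℕ∞) (Function.uncurry Υ))
    (hΥpos : ∀ x E, 0 < Υ x E) (hΨpos : ∀ x E, 0 < Ψ x E)
    (hΨE : ∀ x E, 0 < pdE Ψ x E)
    (g70 : X → ℝ) (n1 n2 : Fin 6 → X → ℝ)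
    (hg70 : ContDiff ℝ (⊤ : ℕ∞) g70)
    (hn1 : ∀ k, ContDiff ℝ (⊤ : ℕ∞) (n1 k)) (hn2 : ∀ k, ContDiff ℝ (⊤ : ℕ∞) (n2 k))
    -- `g⁷(x,E) = g⁷₀(x) − ∫₀^E ∂_s(Ψ²)/(4Υ) ds`, assumed negative
    (g7 : X → ℝ → ℝ)
    (hg7 : ∀ x E, g7 x E =
      g70 x - ∫ s in (0:ℝ)..E, deriv (fun t => Ψ x t ^ 2) s / (4 * Υ x s))
    (hg7neg : ∀ x E, g7 x E < 0)
    -- `g⁸ = −(Ψ*)²/(4Υ²g⁷)`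
    (g8 : X → ℝ → ℝ)
    (hg8 : ∀ x E, g8 x E = -(pdE Ψ x E) ^ 2 / (4 * Υ x E ^ 2 * g7 x E))
    -- `w_k = ∂_{x^k}Ψ / Ψ*`
    (w : Fin 6 → X → ℝ → ℝ)
    (hw : ∀ k x E, w k x E = pdx k Ψ x E / pdE Ψ x E)
    -- `n_k(x,E) = n₁ₖ(x) + n₂ₖ(x) ∫₀^E g⁸ (−g⁷)^{−3/2} ds`
    (nf : Fin 6 → X → ℝ → ℝ)
    (hnf : ∀ k x E, nf k x E = n1 k x + n2 k x *
      ∫ s in (0:ℝ)..E, g8 x s * (-g7 x s) ^ (-(3:ℝ)/2))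
    -- `ϖ = ln( |(g⁷)*| / √(−g⁷ g⁸) )`
    (varpi : X → ℝ → ℝ)
    (hvarpi : ∀ x E, varpi x E =
      Real.log (|pdE g7 x E| / Real.sqrt (-(g7 x E * g8 x E)))) :
    -- `ϖ = ln Ψ`
    (∀ x E, varpi x E = Real.log (Ψ x E)) ∧
    -- (a) `(ϖ*)(g⁷)* = 2 g⁷ g⁸ Υ`
    (∀ x E, pdE varpi x E * pdE g7 x E = 2 * g7 x E * g8 x E * Υ x E) ∧
    -- (b) `((g⁷)* ϖ*) w_k = (g⁷)* ∂_{x^k}ϖ`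
    (∀ k x E, pdE g7 x E * pdE varpi x E * w k x E = pdE g7 x E * pdx k varpi x E) ∧
    -- (c) `(n_k)** + [ln((−g⁷)^{3/2}/g⁸)]* (n_k)* = 0`
    (∀ k x E, deriv (deriv (nf k x)) E +
      deriv (fun t => Real.log ((-g7 x t) ^ ((3:ℝ)/2) / g8 x t)) E *
        deriv (nf k x) E = 0) := by
  have hle : ((⊤ : ℕ∞) : WithTop ℕ∞) ≠ 0 := by simp
  have hΨx : ∀ x : X, ContDiff ℝ (⊤ : ℕ∞) (Ψ x) := fun x =>
    hΨ.comp (contDiff_const.prodMk contDiff_id)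
  have hΥx : ∀ x : X, ContDiff ℝ (⊤ : ℕ∞) (Υ x) := fun x =>
    hΥ.comp (contDiff_const.prodMk contDiff_id)
  have hΨd : ∀ x : X, ContDiff ℝ (⊤ : ℕ∞) (deriv (Ψ x)) := fun x =>
    (contDiff_infty_iff_deriv.mp (hΨx x)).2
  have hΨdiff : ∀ x E, DifferentiableAt ℝ (Ψ x) E := fun x E =>
    ((hΨx x).differentiable hle) E
  have hΥne : ∀ x E, Υ x E ≠ 0 := fun x E => ne_of_gt (hΥpos x E)
  have hΨne : ∀ x E, Ψ x E ≠ 0 := fun x E => ne_of_gt (hΨpos x E)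
  have hΨEne : ∀ x E, pdE Ψ x E ≠ 0 := fun x E => ne_of_gt (hΨE x E)
  have hg7ne : ∀ x E, g7 x E ≠ 0 := fun x E => ne_of_lt (hg7neg x E)
  -- derivative of g7 in E
  have hg7d : ∀ x E, HasDerivAt (g7 x) (-(Ψ x E * pdE Ψ x E) / (2 * Υ x E)) E := by
    intro x E
    have hc : Continuous (fun s => deriv (fun t => Ψ x t ^ 2) s / (4 * Υ x s)) := by
      have h1 : ContDiff ℝ (⊤ : ℕ∞) (fun t => Ψ x t ^ 2) := (hΨx x).pow 2
      have h2 := (contDiff_infty_iff_deriv.mp h1).2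
      exact h2.continuous.div (continuous_const.mul (hΥx x).continuous)
        (fun s => by have := hΥpos x s; positivity)
    have hI : HasDerivAt
        (fun E => ∫ s in (0:ℝ)..E, deriv (fun t => Ψ x t ^ 2) s / (4 * Υ x s))
        (deriv (fun t => Ψ x t ^ 2) E / (4 * Υ x E)) E :=
      (hc.integral_hasStrictDerivAt 0 E).hasDerivAt
    have hfun : g7 x = fun E => g70 x -
        ∫ s in (0:ℝ)..E, deriv (fun t => Ψ x t ^ 2) s / (4 * Υ x s) := funext (hg7 x)
    rw [hfun]
    have h' := hI.const_sub (g70 x)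
    refine h'.congr_deriv ?_
    have hsq : deriv (fun t => Ψ x t ^ 2) E = 2 * Ψ x E * pdE Ψ x E := by
      have := ((hΨdiff x E).hasDerivAt.pow 2).deriv
      rw [show (fun t => Ψ x t ^ 2) = Ψ x ^ 2 from rfl, this]; simp [pdE]
    rw [hsq]
    have := hΥne x E
    field_simp
    ring
  have hpdE7 : ∀ x E, pdE g7 x E = -(Ψ x E * pdE Ψ x E) / (2 * Υ x E) := fun x E =>
    (hg7d x E).deriv
  -- g8 is positive
  have hg8pos : ∀ x E, 0 < g8 x E := by
    intro x E
    rw [hg8]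
    apply div_pos_of_neg_of_neg
    · have := hΨE x E; nlinarith
    · exact mul_neg_of_pos_of_neg (by have := hΥpos x E; positivity) (hg7neg x E)
  -- varpi = log Ψ
  have key : ∀ x E, varpi x E = Real.log (Ψ x E) := by
    intro x E
    have hP := hΨpos x E
    have hE := hΨE x E
    have hU := hΥpos x E
    have h7 := hg7ne x E
    rw [hvarpi]
    congr 1
    rw [hpdE7, hg8]
    have habs : |-(Ψ x E * pdE Ψ x E) / (2 * Υ x E)| = Ψ x E * pdE Ψ x E / (2 * Υ x E) := by
      rw [abs_div, abs_neg, abs_of_pos (by positivity), abs_of_pos (by positivity)]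
    have hsqrt : Real.sqrt (-(g7 x E * (-(pdE Ψ x E) ^ 2 / (4 * Υ x E ^ 2 * g7 x E))))
        = pdE Ψ x E / (2 * Υ x E) := by
      have heq : -(g7 x E * (-(pdE Ψ x E) ^ 2 / (4 * Υ x E ^ 2 * g7 x E)))
          = (pdE Ψ x E / (2 * Υ x E)) ^ 2 := by
        field_simp
        ring
      rw [heq, Real.sqrt_sq (by positivity)]
    rw [habs, hsqrt]
    field_simp
  -- derivative of varpi in E
  have hpdvar : ∀ x E, pdE varpi x E = pdE Ψ x E / Ψ x E := by
    intro x E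
    have hvx : varpi x = fun E => Real.log (Ψ x E) := funext (key x)
    show deriv (varpi x) E = _
    rw [hvx]
    exact ((hΨdiff x E).hasDerivAt.log (hΨne x E)).deriv
  refine ⟨key, ?_, ?_, ?_⟩
  · -- (a)
    intro x E
    rw [hpdvar, hpdE7, hg8]
    have := hΨne x E
    have := hΥne x E
    have := hg7ne x E
    field_simp
    ring
  · -- (b)
    intro k x E
    have hFd : DifferentiableAt ℝ (fun x' => Ψ x' E) x :=
      by have := DifferentiableAt.comp x ((hΨ.differentiable hle) (x, E))
           ((differentiableAt_id (𝕜 := ℝ) (E := X) (x := x)).prodMk (differentiableAt_const E)); exact this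
    have hlog : HasFDerivAt (fun x' => Real.log (Ψ x' E))
        ((Ψ x E)⁻¹ • fderiv ℝ (fun x' => Ψ x' E) x) x :=
      (hFd.hasFDerivAt).log (hΨne x E)
    have hpx : pdx k varpi x E = (Ψ x E)⁻¹ * pdx k Ψ x E := by
      show fderiv ℝ (fun x' => varpi x' E) x (Pi.single k 1) = _
      have hfun : (fun x' => varpi x' E) = fun x' => Real.log (Ψ x' E) :=
        funext fun x' => key x' E
      rw [hfun, hlog.fderiv]
      simp [pdx]
    rw [hpx, hpdvar, hw]
    have := hΨEne x E
    have := hΨne x E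
    field_simp
  · -- (c)
    intro k x E
    set h : ℝ → ℝ := fun s => g8 x s * (-g7 x s) ^ (-(3:ℝ)/2) with hh
    have hg7diff : Differentiable ℝ (g7 x) := fun t => (hg7d x t).differentiableAt
    have hg8fun : g8 x = fun t => -(deriv (Ψ x) t) ^ 2 / (4 * Υ x t ^ 2 * g7 x t) :=
      funext (hg8 x)
    have hg8diff : Differentiable ℝ (g8 x) := by
      rw [hg8fun]
      intro t
      have h1 : DifferentiableAt ℝ (deriv (Ψ x)) t := ((hΨd x).differentiable hle) t
      have hden : DifferentiableAt ℝ (fun t => 4 * Υ x t ^ 2 * g7 x t) t :=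
        ((differentiableAt_const (4:ℝ)).mul (((hΥx x).differentiable hle t).pow 2)).mul
          (hg7diff t)
      exact (h1.pow 2).neg.div hden
        (mul_ne_zero (mul_ne_zero (by norm_num) (pow_ne_zero 2 (hΥne x t))) (hg7ne x t))
    have hdiffh : Differentiable ℝ h := by
      intro t
      exact (hg8diff t).mul
        ((hg7diff t).neg.rpow_const (Or.inl (ne_of_gt (neg_pos.mpr (hg7neg x t)))))
    have hch : Continuous h := hdiffh.continuous
    have hpos : ∀ t, 0 < h t := fun t =>
      mul_pos (hg8pos x t) (Real.rpow_pos_of_pos (neg_pos.mpr (hg7neg x t)) _)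
    have hnfder : deriv (nf k x) = fun t => n2 k x * h t := by
      funext t
      have hfun : nf k x = fun E => n1 k x + n2 k x * ∫ s in (0:ℝ)..E, h s :=
        funext (hnf k x)
      rw [hfun]
      have hI : HasDerivAt (fun E => ∫ s in (0:ℝ)..E, h s) (h t) t :=
        (hch.integral_hasStrictDerivAt 0 t).hasDerivAt
      exact ((hI.const_mul (n2 k x)).const_add (n1 k x)).deriv
    have hd2 : deriv (deriv (nf k x)) E = n2 k x * deriv h E := by
      rw [hnfder]
      exact deriv_const_mul _ (hdiffh E)
    have hlogfun : (fun t => Real.log ((-g7 x t) ^ ((3:ℝ)/2) / g8 x t))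
        = fun t => -Real.log (h t) := by
      funext t
      have hpos7 : 0 < -g7 x t := neg_pos.mpr (hg7neg x t)
      have hg8ne : g8 x t ≠ 0 := ne_of_gt (hg8pos x t)
      have hrne : (-g7 x t) ^ ((3:ℝ)/2) ≠ 0 := ne_of_gt (Real.rpow_pos_of_pos hpos7 _)
      have hinv : (-g7 x t) ^ ((3:ℝ)/2) / g8 x t = (h t)⁻¹ := by
        rw [hh]
        have hexp : (-(3:ℝ))/2 = -((3:ℝ)/2) := by norm_num
        simp only [hexp, Real.rpow_neg hpos7.le]
        field_simp
      rw [hinv, Real.log_inv]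
    have hdlog : deriv (fun t => Real.log ((-g7 x t) ^ ((3:ℝ)/2) / g8 x t)) E
        = -(deriv h E / h E) := by
      rw [hlogfun]
      exact (((hdiffh E).hasDerivAt.log (ne_of_gt (hpos E))).neg).deriv
    rw [hd2, hdlog, hnfder]
    have hne : h E ≠ 0 := ne_of_gt (hpos E)
    field_simp
    ring

end

end Stmt6
end
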